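/- Let [X_S, X_T] ∈ ℝ^{n×(s+t)} have full column rank, let M_S = I - X_S(X_S^T X_S)^{-1}X_S^T, and let β ∈ ℝ^t. Then ||M_S X_T β||² ≥ λ_min(X_{S∪T}^T X_{S∪T}) · ||β||², where X_{S∪T} = [X_S, X_T] and λ_min denotes the smallest eigenvalue. -/

import Mathlib

open Matrix

lemma rayleigh_aux {m : Type*} [Fintype m] [DecidableEq m] (A : Matrix m m ℝ)
    (hA : A.IsHermitian) (v : m → ℝ) :
    (⨅ i, hA.eigenvalues i) * (v ⬝ᵥ v) ≤ v ⬝ᵥ (A *ᵥ v) := by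
  set U : Matrix m m ℝ := (hA.eigenvectorUnitary : Matrix m m ℝ) with hU
  have hUU : U * star U = 1 := (Matrix.mem_unitaryGroup_iff).mp hA.eigenvectorUnitary.2
  have htr : star U = Uᵀ := by ext i j; simp [conjTranspose]
  have hsw : star U *ᵥ v = v ᵥ* U := by rw [htr, Matrix.mulVec_transpose]
  set w : m → ℝ := v ᵥ* U with hw
  have hvv : v ⬝ᵥ v = w ⬝ᵥ w := by
    have h1 : w ⬝ᵥ w = v ⬝ᵥ ((U * star U) *ᵥ v) := by
      conv_rhs => rw [← Matrix.mulVec_mulVec, Matrix.dotProduct_mulVec, hsw]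
    rw [h1, hUU, Matrix.one_mulVec]
  have hAv : v ⬝ᵥ (A *ᵥ v) = ∑ i, hA.eigenvalues i * (w i * w i) := by
    conv_lhs => rw [hA.spectral_theorem]; simp only [Unitary.conjStarAlgAut_apply, Unitary.coe_star]
    rw [← hU, ← Matrix.mulVec_mulVec, ← Matrix.mulVec_mulVec, Matrix.dotProduct_mulVec, hsw,
      ← hw]
    simp only [dotProduct, Matrix.mulVec_diagonal, Function.comp_apply,
      RCLike.ofReal_real_eq_id, id_eq]
    exact Finset.sum_congr rfl fun i _ => by ring
  rw [hvv, hAv, dotProduct, Finset.mul_sum]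
  apply Finset.sum_le_sum
  intro i _
  exact mul_le_mul_of_nonneg_right (ciInf_le (Set.Finite.bddBelow (Set.finite_range _)) i)
    (mul_self_nonneg _)

/-- `‖M_S X_T β‖² ≥ λ_min(X_{S∪T}ᵀ X_{S∪T}) · ‖β‖²`. -/
theorem stmt_4 {n s t : ℕ} (XS : Matrix (Fin n) (Fin s) ℝ) (XT : Matrix (Fin n) (Fin t) ℝ)
    (β : Fin t → ℝ)
    (hS : IsUnit (XSᵀ * XS).det)
    (hfull : IsUnit ((fromCols XS XT)ᵀ * fromCols XS XT).det)
    (MS : Matrix (Fin n) (Fin n) ℝ) (hMS : MS = 1 - XS * (XSᵀ * XS)⁻¹ * XSᵀ)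
    (hG : ((fromCols XS XT)ᵀ * fromCols XS XT).IsHermitian) :
    (⨅ i, hG.eigenvalues i) * (β ⬝ᵥ β) ≤ (MS *ᵥ (XT *ᵥ β)) ⬝ᵥ (MS *ᵥ (XT *ᵥ β)) := by
  set X := fromCols XS XT with hX
  set A := Xᵀ * X with hA
  set G : Matrix (Fin s) (Fin t) ℝ := (XSᵀ * XS)⁻¹ * XSᵀ * XT with hGdef
  set v : Fin s ⊕ Fin t → ℝ := Sum.elim (-(G *ᵥ β)) β with hv
  have hmat : MS * XT = XT - XS * G := by
    rw [hMS, hGdef, Matrix.sub_mul, Matrix.one_mul, Matrix.mul_assoc, Matrix.mul_assoc, Matrix.mul_assoc]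
  have hXv : X *ᵥ v = MS *ᵥ (XT *ᵥ β) := by
    rw [hv, hX, fromCols_mulVec_sumElim, Matrix.mulVec_mulVec, hmat,
      Matrix.sub_mulVec, Matrix.mulVec_neg, Matrix.mulVec_mulVec]
    abel
  have hquad : v ⬝ᵥ (A *ᵥ v) = (X *ᵥ v) ⬝ᵥ (X *ᵥ v) := by
    rw [hA, ← Matrix.mulVec_mulVec, Matrix.dotProduct_mulVec, Matrix.vecMul_transpose]
  have hvnorm : β ⬝ᵥ β ≤ v ⬝ᵥ v := by
    rw [hv, sumElim_dotProduct_sumElim]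
    have : (0:ℝ) ≤ (-(G *ᵥ β)) ⬝ᵥ (-(G *ᵥ β)) := by
      rw [neg_dotProduct, dotProduct_neg, neg_neg]
      exact Finset.sum_nonneg fun i _ => mul_self_nonneg _
    linarith
  have hpsd : A.PosSemidef := by
    have := Matrix.posSemidef_conjTranspose_mul_self X
    simpa [Matrix.conjTranspose_eq_transpose_of_trivial, hA] using this
  have hmin_nonneg : 0 ≤ ⨅ i, hG.eigenvalues i :=
    Real.iInf_nonneg fun i => hpsd.eigenvalues_nonneg i
  calc (⨅ i, hG.eigenvalues i) * (β ⬝ᵥ β)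
      ≤ (⨅ i, hG.eigenvalues i) * (v ⬝ᵥ v) :=
        mul_le_mul_of_nonneg_left hvnorm hmin_nonneg
    _ ≤ v ⬝ᵥ (A *ᵥ v) := rayleigh_aux A hG v
    _ = (MS *ᵥ (XT *ᵥ β)) ⬝ᵥ (MS *ᵥ (XT *ᵥ β)) := by rw [hquad, hXv]
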